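/- A topological space X is normal if and only if for any two disjoint closed sets A and B there exist disjoint Q*g-open sets U and V with A ⊆ U and B ⊆ V. -/
import Mathlib


open Set Topology

def QStarClosed {X : Type*} [TopologicalSpace X] (A : Set X) : Prop :=
  IsClosed A ∧ interior A = ∅

def QStarOpen {X : Type*} [TopologicalSpace X] (A : Set X) : Prop :=
  QStarClosed Aᶜ

def GClosed {X : Type*} [TopologicalSpace X] (A : Set X) : Prop :=
  ∀ U : Set X, IsOpen U → A ⊆ U → closure A ⊆ U

def QStarGClosed {X : Type*} [TopologicalSpace X] (A : Set X) : Prop :=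
  ∀ U : Set X, QStarOpen U → A ⊆ U → closure A ⊆ U

def QStarGOpen {X : Type*} [TopologicalSpace X] (A : Set X) : Prop :=
  QStarGClosed Aᶜ

def QStarNormal (X : Type*) [TopologicalSpace X] : Prop :=
  ∀ A B : Set X, QStarClosed A → QStarClosed B → Disjoint A B →
    ∃ U V : Set X, IsOpen U ∧ IsOpen V ∧ A ⊆ U ∧ B ⊆ V ∧ Disjoint U V

def NormalSp (X : Type*) [TopologicalSpace X] : Prop :=
  ∀ A B : Set X, IsClosed A → IsClosed B → Disjoint A B →
    ∃ U V : Set X, IsOpen U ∧ IsOpen V ∧ A ⊆ U ∧ B ⊆ V ∧ Disjoint U V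

def GNormal (X : Type*) [TopologicalSpace X] : Prop :=
  ∀ A B : Set X, GClosed A → GClosed B → Disjoint A B →
    ∃ U V : Set X, IsOpen U ∧ IsOpen V ∧ A ⊆ U ∧ B ⊆ V ∧ Disjoint U V

lemma open_qstargopen {X : Type*} [TopologicalSpace X] {U : Set X} (hU : IsOpen U) :
    QStarGOpen U := by
  intro W _ hsub
  rwa [(isClosed_compl_iff.2 hU).closure_eq]

lemma qstaropen_aux {X : Type*} [TopologicalSpace X] {A : Set X} (hA : IsClosed A) :
    QStarOpen (Aᶜ ∪ interior A) := by
  constructor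
  · rw [compl_union, compl_compl]
    exact hA.inter isOpen_interior.isClosed_compl
  · rw [compl_union, compl_compl]
    apply eq_empty_of_subset_empty
    calc interior (A ∩ (interior A)ᶜ)
        ⊆ interior A ∩ interior ((interior A)ᶜ) := by
          rw [interior_inter]
      _ ⊆ interior A ∩ (interior A)ᶜ := inter_subset_inter_right _ interior_subset
      _ = ∅ := inter_compl_self _

theorem stmt15 {X : Type*} [TopologicalSpace X] :
    NormalSp X ↔
      ∀ A B : Set X, IsClosed A → IsClosed B → Disjoint A B →
        ∃ U V : Set X, QStarGOpen U ∧ QStarGOpen V ∧ A ⊆ U ∧ B ⊆ V ∧ Disjoint U V := by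
  constructor
  · intro h A B hA hB hAB
    obtain ⟨U, V, hU, hV, hAU, hBV, hUV⟩ := h A B hA hB hAB
    exact ⟨U, V, open_qstargopen hU, open_qstargopen hV, hAU, hBV, hUV⟩
  · intro h A B hA hB hAB
    obtain ⟨U, V, hU, hV, hAU, hBV, hUV⟩ := h A B hA hB hAB
    have hclU : closure Uᶜ ⊆ Aᶜ ∪ interior A :=
      hU _ (qstaropen_aux hA) (subset_union_of_subset_left (compl_subset_compl.2 hAU) _)
    have hclV : closure Vᶜ ⊆ Bᶜ ∪ interior B :=
      hV _ (qstaropen_aux hB) (subset_union_of_subset_left (compl_subset_compl.2 hBV) _)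
    have hUsub : (closure Uᶜ)ᶜ ⊆ U := by
      rw [compl_subset_comm]
      exact subset_closure
    have hVsub : (closure Vᶜ)ᶜ ⊆ V := by
      rw [compl_subset_comm]
      exact subset_closure
    refine ⟨(closure Uᶜ)ᶜ ∪ interior A, (closure Vᶜ)ᶜ ∪ interior B,
      isClosed_closure.isOpen_compl.union isOpen_interior,
      isClosed_closure.isOpen_compl.union isOpen_interior, ?_, ?_, ?_⟩
    · intro x hx
      by_cases hxc : x ∈ closure Uᶜ
      · rcases hclU hxc with h1 | h1
        · exact absurd hx h1
        · exact Or.inr h1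
      · exact Or.inl hxc
    · intro x hx
      by_cases hxc : x ∈ closure Vᶜ
      · rcases hclV hxc with h1 | h1
        · exact absurd hx h1
        · exact Or.inr h1
      · exact Or.inl hxc
    · rw [Set.disjoint_left]
      rintro x (hx1 | hx1) (hx2 | hx2)
      · exact Set.disjoint_left.1 hUV (hUsub hx1) (hVsub hx2)
      · exact Set.disjoint_left.1 hUV (hUsub hx1) (hBV (interior_subset hx2))
      · exact Set.disjoint_left.1 hUV (hAU (interior_subset hx1)) (hVsub hx2)
      · exact Set.disjoint_left.1 hAB (interior_subset hx1) (interior_subset hx2)
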